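/- Let u, ũ ∈ ℂ^L with ‖u‖₂ = ‖ũ‖₂ = 1, and let u_p, ũ_p be their entrywise phase vectors, u_p[k] = u[k]/|u[k]|, ũ_p[k] = ũ[k]/|ũ[k]|. Set δ = min_k |u[k]| and assume δ > 0 and ‖ũ − u‖₂ ≤ δ/2. Then ‖ũ_p − u_p‖₂ ≤ 3‖ũ − u‖₂/δ². -/

import Mathlib

lemma aux_arith (δ S : ℝ) (hδpos : 0 < δ) (hδ1 : δ ≤ 1) (hS : 0 ≤ S) :
    2 / δ * S ≤ 3 * S / δ ^ 2 := by
  rw [div_mul_eq_mul_div, div_le_div_iff₀ hδpos (pow_pos hδpos 2)]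
  nlinarith [mul_nonneg hS hδpos.le, mul_nonneg (mul_nonneg hS hδpos.le) hδpos.le]

lemma phase_bound (a b : ℂ) (hb : b ≠ 0) :
    ‖a / (‖a‖ : ℂ) - b / (‖b‖ : ℂ)‖ ≤ 2 * ‖a - b‖ / ‖b‖ := by
  have hbn : (0:ℝ) < ‖b‖ := norm_pos_iff.mpr hb
  by_cases ha : a = 0
  · have hx : ‖b‖ ≠ 0 := by simpa using hbn.ne'
    simp [ha, norm_div, Complex.norm_real, div_self hbn.ne', norm_sub_rev]
    rw [mul_div_assoc, div_self hx]
    norm_num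
  · have han : (0:ℝ) < ‖a‖ := norm_pos_iff.mpr ha
    have key : a / (‖a‖ : ℂ) - b / (‖b‖ : ℂ)
        = (a - b) / (‖b‖ : ℂ) + a * ((‖a‖ : ℂ)⁻¹ - (‖b‖ : ℂ)⁻¹) := by
      field_simp
      ring
    rw [key]
    have h1 : ‖(a - b) / (‖b‖ : ℂ)‖ = ‖a - b‖ / ‖b‖ := by
      rw [norm_div, Complex.norm_real, Real.norm_eq_abs, abs_of_pos hbn]
    have h2 : ‖a * ((‖a‖ : ℂ)⁻¹ - (‖b‖ : ℂ)⁻¹)‖ ≤ ‖a - b‖ / ‖b‖ := by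
      rw [norm_mul]
      have : ‖((‖a‖ : ℂ)⁻¹ - (‖b‖ : ℂ)⁻¹)‖ = |‖a‖⁻¹ - ‖b‖⁻¹| := by
        rw [← Complex.ofReal_inv, ← Complex.ofReal_inv, ← Complex.ofReal_sub,
          Complex.norm_real, Real.norm_eq_abs]
      rw [this]
      have habs : |‖a‖⁻¹ - ‖b‖⁻¹| = |‖b‖ - ‖a‖| / (‖a‖ * ‖b‖) := by
        rw [inv_sub_inv han.ne' hbn.ne', abs_div, abs_of_pos (mul_pos han hbn)]
      rw [habs]
      have hnn : |‖b‖ - ‖a‖| ≤ ‖a - b‖ := by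
        rw [abs_sub_comm]; exact abs_norm_sub_norm_le a b
      calc ‖a‖ * (|‖b‖ - ‖a‖| / (‖a‖ * ‖b‖)) = |‖b‖ - ‖a‖| / ‖b‖ := by
            rw [mul_div_assoc', mul_div_mul_left _ _ han.ne']
        _ ≤ ‖a - b‖ / ‖b‖ := by gcongr
    calc ‖(a - b) / (‖b‖ : ℂ) + a * ((‖a‖ : ℂ)⁻¹ - (‖b‖ : ℂ)⁻¹)‖
        ≤ ‖(a - b) / (‖b‖ : ℂ)‖ + ‖a * ((‖a‖ : ℂ)⁻¹ - (‖b‖ : ℂ)⁻¹)‖ := norm_add_le _ _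
      _ ≤ ‖a - b‖ / ‖b‖ + ‖a - b‖ / ‖b‖ := by rw [h1]; gcongr
      _ = 2 * ‖a - b‖ / ‖b‖ := by ring

theorem stmt3 (L : ℕ) (u v : Fin L → ℂ) (δ : ℝ)
    (hu : Real.sqrt (∑ k, ‖u k‖ ^ 2) = 1)
    (hv : Real.sqrt (∑ k, ‖v k‖ ^ 2) = 1)
    (hδ : IsLeast (Set.range fun k => ‖u k‖) δ)
    (hδpos : 0 < δ)
    (hclose : Real.sqrt (∑ k, ‖v k - u k‖ ^ 2) ≤ δ / 2) :
    Real.sqrt (∑ k, ‖v k / (‖v k‖ : ℂ) - u k / (‖u k‖ : ℂ)‖ ^ 2) ≤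
      3 * Real.sqrt (∑ k, ‖v k - u k‖ ^ 2) / δ ^ 2 := by
  obtain ⟨⟨k₀, hk₀⟩, hlb⟩ := hδ
  have hk₀' : ‖u k₀‖ = δ := hk₀
  have husum : (∑ k, ‖u k‖ ^ 2) = 1 := by
    have := Real.sqrt_eq_one.mp hu; linarith [this]
  have hδ1 : δ ≤ 1 := by
    have h1 : δ ^ 2 ≤ 1 := by
      rw [← husum]
      calc δ ^ 2 = ‖u k₀‖ ^ 2 := by rw [hk₀']
        _ ≤ ∑ k, ‖u k‖ ^ 2 :=
          Finset.single_le_sum (f := fun i => ‖u i‖ ^ 2) (fun i _ => by positivity) (Finset.mem_univ k₀)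
    nlinarith
  set T := ∑ k, ‖v k - u k‖ ^ 2 with hT
  have hTnn : 0 ≤ T := Finset.sum_nonneg fun i _ => by positivity
  have hSnn : 0 ≤ Real.sqrt T := Real.sqrt_nonneg _
  have hpt : ∀ k, ‖v k / (‖v k‖ : ℂ) - u k / (‖u k‖ : ℂ)‖ ^ 2
      ≤ (2 / δ) ^ 2 * ‖v k - u k‖ ^ 2 := by
    intro k
    have hun : u k ≠ 0 := by
      intro h
      have := hlb ⟨k, rfl⟩
      simp [h] at this
      linarith
    have hb := phase_bound (v k) (u k) hun
    have hδu : δ ≤ ‖u k‖ := hlb ⟨k, rfl⟩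
    have h2 : 2 * ‖v k - u k‖ / ‖u k‖ ≤ 2 / δ * ‖v k - u k‖ := by
      rw [show 2 / δ * ‖v k - u k‖ = 2 * ‖v k - u k‖ / δ by ring]
      gcongr
    have := hb.trans h2
    calc ‖v k / (‖v k‖ : ℂ) - u k / (‖u k‖ : ℂ)‖ ^ 2
        ≤ (2 / δ * ‖v k - u k‖) ^ 2 := by
          apply pow_le_pow_left₀ (norm_nonneg _) this
      _ = (2 / δ) ^ 2 * ‖v k - u k‖ ^ 2 := by ring
  have hsum : (∑ k, ‖v k / (‖v k‖ : ℂ) - u k / (‖u k‖ : ℂ)‖ ^ 2)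
      ≤ (2 / δ) ^ 2 * T := by
    rw [hT, Finset.mul_sum]
    exact Finset.sum_le_sum fun k _ => hpt k
  calc Real.sqrt (∑ k, ‖v k / (‖v k‖ : ℂ) - u k / (‖u k‖ : ℂ)‖ ^ 2)
      ≤ Real.sqrt ((2 / δ) ^ 2 * T) := Real.sqrt_le_sqrt hsum
    _ = (2 / δ) * Real.sqrt T := by
        rw [Real.sqrt_mul (by positivity), Real.sqrt_sq (by positivity)]
    _ ≤ 3 * Real.sqrt T / δ ^ 2 := aux_arith δ (Real.sqrt T) hδpos hδ1 hSnn
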